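/- Suppose the conditional squared error e(X) = E[(Y − g(X))² | X, S=1] and the inverse odds w(X) = P(S=0 | X)/P(S=1 | X) are both nondecreasing functions of a real covariate X, with at least one of them non-constant under the source distribution. Then, under conditional independence of Y and S given X and positivity, the target-population MSE is at least the source-population MSE: E[(Y − g(X))² | S=0] ≥ E[(Y − g(X))² | S=1], with equality iff e(X) or w(X) is a.s. constant appropriately. -/

import Mathlib

open MeasureTheory ProbabilityTheory

open scoped ENNReal

lemma exists_split {α : Type*} [MeasurableSpace α] (ν : Measure α) [IsProbabilityMeasure ν]
    {f : α → ℝ} (h : ¬ ∃ c, ∀ᵐ x ∂ν, f x = c) :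
    ∃ r : ℝ, 0 < ν {x | f x ≤ r} ∧ 0 < ν {x | r < f x} := by
  by_contra hcon
  push_neg at hcon
  have hor : ∀ r : ℝ, ν {x | f x ≤ r} = 0 ∨ ν {x | r < f x} = 0 := by
    intro r
    rcases lt_or_ge 0 (ν {x | f x ≤ r}) with h1 | h1
    · exact Or.inr (le_antisymm (hcon r h1) bot_le)
    · exact Or.inl (le_antisymm h1 bot_le)
  set T : Set ℝ := {r | ν {x | f x ≤ r} = 0} with hTdef
  have hmono : ∀ {a b : ℝ}, a ≤ b → b ∈ T → a ∈ T := fun {a b} hab hb =>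
    le_antisymm ((measure_mono fun x hx => le_trans hx hab).trans hb.le) bot_le
  have hnotuniv : ∃ r, r ∉ T := by
    by_contra hall
    push_neg at hall
    have hle : ν Set.univ ≤ 0 := by
      have hU : Set.univ ⊆ ⋃ n : ℕ, {x | f x ≤ (n : ℝ)} := fun x _ => by
        obtain ⟨n, hn⟩ := exists_nat_ge (f x)
        exact Set.mem_iUnion.2 ⟨n, hn⟩
      calc ν Set.univ ≤ ν (⋃ n : ℕ, {x | f x ≤ (n : ℝ)}) := measure_mono hU
        _ ≤ ∑' n : ℕ, ν {x | f x ≤ (n : ℝ)} := measure_iUnion_le _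
        _ = 0 := by rw [ENNReal.tsum_eq_zero]; exact fun n => hall _
    simp at hle
  have hnonempty : ∃ r, r ∈ T := by
    by_contra hnone
    push_neg at hnone
    have hz : ∀ r : ℝ, ν {x | r < f x} = 0 := fun r => (hor r).resolve_left (hnone r)
    have hle : ν Set.univ ≤ 0 := by
      have hU : Set.univ ⊆ ⋃ n : ℕ, {x | (-(n : ℝ)) < f x} := fun x _ => by
        obtain ⟨n, hn⟩ := exists_nat_gt (-(f x))
        exact Set.mem_iUnion.2 ⟨n, by simp only [Set.mem_setOf_eq]; linarith⟩
      calc ν Set.univ ≤ ν (⋃ n : ℕ, {x | (-(n : ℝ)) < f x}) := measure_mono hU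
        _ ≤ ∑' n : ℕ, ν {x | (-(n : ℝ)) < f x} := measure_iUnion_le _
        _ = 0 := by rw [ENNReal.tsum_eq_zero]; exact fun n => hz _
    simp at hle
  obtain ⟨b, hb⟩ := hnotuniv
  obtain ⟨a, ha⟩ := hnonempty
  have hbdd : BddAbove T := ⟨b, fun t ht => by
    by_contra hlt
    push_neg at hlt
    exact hb (hmono hlt.le ht)⟩
  set c := sSup T with hc
  have hup : ∀ r, c < r → ν {x | r < f x} = 0 := by
    intro r hr
    have hrT : r ∉ T := fun hrT => absurd (le_csSup hbdd hrT) (not_le.2 hr)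
    exact (hor r).resolve_left hrT
  have hlow : ∀ r, r < c → ν {x | f x ≤ r} = 0 := by
    intro r hr
    obtain ⟨t, htT, hrt⟩ := exists_lt_of_lt_csSup ⟨a, ha⟩ hr
    exact le_antisymm ((measure_mono fun x hx => le_trans hx hrt.le).trans htT.le) bot_le
  have h1 : ν {x | c < f x} = 0 := by
    have hsub : {x | c < f x} ⊆ ⋃ n : ℕ, {x | c + 1/((n : ℝ)+1) < f x} := fun x hx => by
      have hx' : c < f x := hx
      obtain ⟨n, hn⟩ := exists_nat_one_div_lt (K := ℝ) (sub_pos.2 hx')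
      exact Set.mem_iUnion.2 ⟨n, by simp only [Set.mem_setOf_eq]; linarith⟩
    refine le_antisymm ((measure_mono hsub).trans ((measure_iUnion_le _).trans ?_)) bot_le
    have hzz : ∀ n : ℕ, ν {x | c + 1/((n : ℝ)+1) < f x} = 0 := fun n =>
      hup _ (lt_add_of_pos_right c (by positivity))
    exact le_of_eq (by rw [ENNReal.tsum_eq_zero]; exact fun n => hzz n)
  have h2 : ν {x | f x < c} = 0 := by
    have hsub : {x | f x < c} ⊆ ⋃ n : ℕ, {x | f x ≤ c - 1/((n : ℝ)+1)} := fun x hx => by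
      have hx' : f x < c := hx
      obtain ⟨n, hn⟩ := exists_nat_one_div_lt (K := ℝ) (sub_pos.2 hx')
      exact Set.mem_iUnion.2 ⟨n, by simp only [Set.mem_setOf_eq]; linarith⟩
    refine le_antisymm ((measure_mono hsub).trans ((measure_iUnion_le _).trans ?_)) bot_le
    have hzz : ∀ n : ℕ, ν {x | f x ≤ c - 1/((n : ℝ)+1)} = 0 := fun n =>
      hlow _ (sub_lt_self c (by positivity))
    exact le_of_eq (by rw [ENNReal.tsum_eq_zero]; exact fun n => hzz n)
  refine h ⟨c, ?_⟩
  have : ν ({x | c < f x} ∪ {x | f x < c}) = 0 :=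
    le_antisymm ((measure_union_le _ _).trans (by simp [h1, h2])) bot_le
  filter_upwards [measure_eq_zero_iff_ae_notMem.1 this] with x hx
  simp only [Set.mem_union, Set.mem_setOf_eq, not_or, not_lt] at hx
  exact le_antisymm hx.1 hx.2

lemma chebyshev_corr {ν : Measure ℝ} [IsProbabilityMeasure ν] {f g : ℝ → ℝ}
    (hf : Monotone f) (hg : Monotone g) (hfi : Integrable f ν) (hgi : Integrable g ν)
    (hfgi : Integrable (fun x => f x * g x) ν) :
    (∫ x, f x ∂ν) * (∫ x, g x ∂ν) ≤ ∫ x, f x * g x ∂ν ∧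
    ((∫ x, f x * g x ∂ν) = (∫ x, f x ∂ν) * (∫ x, g x ∂ν) ↔
      (∃ c, ∀ᵐ x ∂ν, f x = c) ∨ (∃ c, ∀ᵐ x ∂ν, g x = c)) := by
  set π := ν.prod ν with hπ
  set H : ℝ × ℝ → ℝ := fun p => (f p.1 - f p.2) * (g p.1 - g p.2) with hH
  have hH0 : ∀ p, 0 ≤ H p := fun p => by
    simp only [hH]
    rcases le_total p.1 p.2 with h | h
    · nlinarith [sub_nonpos.2 (hf h), sub_nonpos.2 (hg h)]
    · exact mul_nonneg (sub_nonneg.2 (hf h)) (sub_nonneg.2 (hg h))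
  have h1 : Integrable (fun p : ℝ × ℝ => f p.1 * g p.1) π := by
    simpa using hfgi.mul_prod (integrable_const (1 : ℝ))
  have h2 : Integrable (fun p : ℝ × ℝ => f p.1 * g p.2) π := hfi.mul_prod hgi
  have h3 : Integrable (fun p : ℝ × ℝ => f p.2 * g p.1) π := by
    simpa [mul_comm] using hgi.mul_prod hfi
  have h4 : Integrable (fun p : ℝ × ℝ => f p.2 * g p.2) π := by
    simpa using (integrable_const (1 : ℝ)).mul_prod hfgi
  have hHeq : H = fun p : ℝ × ℝ =>
      f p.1 * g p.1 - f p.1 * g p.2 - f p.2 * g p.1 + f p.2 * g p.2 :=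
    funext fun p => by simp only [hH]; ring
  have hHint : Integrable H π := by rw [hHeq]; exact ((h1.sub h2).sub h3).add h4
  have I1 : ∫ p, f p.1 * g p.1 ∂π = ∫ x, f x * g x ∂ν := by
    simpa using integral_prod_mul (μ := ν) (ν := ν) (fun x => f x * g x) (fun _ => (1 : ℝ))
  have I2 : ∫ p, f p.1 * g p.2 ∂π = (∫ x, f x ∂ν) * (∫ x, g x ∂ν) :=
    integral_prod_mul f g
  have I3 : ∫ p, f p.2 * g p.1 ∂π = (∫ x, f x ∂ν) * (∫ x, g x ∂ν) := by
    rw [show (fun p : ℝ × ℝ => f p.2 * g p.1) = fun p : ℝ × ℝ => g p.1 * f p.2 from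
      funext fun p => mul_comm _ _, integral_prod_mul g f, mul_comm]
  have I4 : ∫ p, f p.2 * g p.2 ∂π = ∫ x, f x * g x ∂ν := by
    simpa using integral_prod_mul (μ := ν) (ν := ν) (fun _ => (1 : ℝ)) (fun x => f x * g x)
  have h12 : Integrable (fun p : ℝ × ℝ => f p.1 * g p.1 - f p.1 * g p.2) π := h1.sub h2
  have h123 : Integrable (fun p : ℝ × ℝ =>
      f p.1 * g p.1 - f p.1 * g p.2 - f p.2 * g p.1) π := h12.sub h3
  have key : ∫ p, H p ∂π =
      2 * ((∫ x, f x * g x ∂ν) - (∫ x, f x ∂ν) * (∫ x, g x ∂ν)) := by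
    rw [hHeq, integral_add h123 h4, integral_sub h12 h3, integral_sub h1 h2, I1, I2, I3, I4]
    ring
  have hnn : 0 ≤ ∫ p, H p ∂π := integral_nonneg hH0
  constructor
  · nlinarith [hnn, key]
  constructor
  · intro heq
    have hzero : ∫ p, H p ∂π = 0 := by rw [key, heq]; ring
    have hae : H =ᵐ[π] 0 :=
      (integral_eq_zero_iff_of_nonneg hH0 hHint).1 hzero
    by_contra hc
    rw [not_or] at hc
    obtain ⟨hcf, hcg⟩ := hc
    obtain ⟨r, hrL, hrU⟩ := exists_split ν hcf
    obtain ⟨r', hrL', hrU'⟩ := exists_split ν hcg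
    set Lf := {x | f x ≤ r} with hLf
    set Lg := {x | g x ≤ r'} with hLg
    have hmLf : MeasurableSet Lf := measurableSet_le hf.measurable measurable_const
    have hmLg : MeasurableSet Lg := measurableSet_le hg.measurable measurable_const
    have hcomp : Lf ⊆ Lg ∨ Lg ⊆ Lf := by
      by_contra hcc
      push_neg at hcc
      obtain ⟨hnfg, hngf⟩ := hcc
      obtain ⟨u, huf, hug⟩ := Set.not_subset.1 hnfg
      obtain ⟨v, hvg, hvf⟩ := Set.not_subset.1 hngf
      rcases le_total u v with huv | hvu
      · exact hug (le_trans (hg huv) hvg)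
      · exact hvf (le_trans (hf hvu) huf)
    have hPne : ∀ (A B : Set ℝ), MeasurableSet A → MeasurableSet B →
        0 < ν A → 0 < ν B → (∀ x ∈ A, ∀ y ∈ B, H (x, y) ≠ 0) → False := by
      intro A B hmA hmB hA hB hAB
      have hsub : A ×ˢ B ⊆ {p : ℝ × ℝ | H p ≠ 0} := fun p hp =>
        hAB p.1 hp.1 p.2 hp.2
      have hzero : π {p : ℝ × ℝ | H p ≠ 0} = 0 := by
        have := hae
        rw [Filter.EventuallyEq, ae_iff] at this
        simpa using this
      have : π (A ×ˢ B) = 0 := le_antisymm ((measure_mono hsub).trans hzero.le) bot_le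
      rw [hπ, Measure.prod_prod] at this
      exact absurd this (ENNReal.mul_pos hA.ne' hB.ne').ne'
    rcases hcomp with hss | hss
    · refine hPne Lf Lgᶜ hmLf hmLg.compl hrL ?_ ?_
      · have : {x | r' < g x} = Lgᶜ := by ext x; simp [hLg, not_le]
        rwa [← this]
      · intro x hx y hy
        have hgx : g x ≤ r' := hss hx
        have hfx : f x ≤ r := hx
        have hgy : r' < g y := not_le.1 hy
        have hfy : r < f y := not_le.1 fun hyy => hy (hss hyy)
        have : 0 < H (x, y) := mul_pos_of_neg_of_neg (by simp; linarith) (by simp; linarith)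
        exact this.ne'
    · refine hPne Lg Lfᶜ hmLg hmLf.compl hrL' ?_ ?_
      · have : {x | r < f x} = Lfᶜ := by ext x; simp [hLf, not_le]
        rwa [← this]
      · intro x hx y hy
        have hfx : f x ≤ r := hss hx
        have hgx : g x ≤ r' := hx
        have hfy : r < f y := not_le.1 hy
        have hgy : r' < g y := not_le.1 fun hyy => hy (hss hyy)
        have : 0 < H (x, y) := mul_pos_of_neg_of_neg (by simp; linarith) (by simp; linarith)
        exact this.ne'
  · rintro (⟨c, hc⟩ | ⟨c, hc⟩)
    · have e1 : ∫ x, f x * g x ∂ν = c * ∫ x, g x ∂ν := by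
        rw [← integral_const_mul c]
        exact integral_congr_ae (hc.mono fun x hx => by dsimp only; rw [hx])
      have e2 : ∫ x, f x ∂ν = c := by
        rw [integral_congr_ae (hc.mono fun x hx => hx)]
        simp
      rw [e1, e2]
    · have e1 : ∫ x, f x * g x ∂ν = (∫ x, f x ∂ν) * c := by
        rw [← integral_mul_const c]
        exact integral_congr_ae (hc.mono fun x hx => by dsimp only; rw [hx])
      have e2 : ∫ x, g x ∂ν = c := by
        rw [integral_congr_ae (hc.mono fun x hx => hx)]
        simp
      rw [e1, e2]

/-- Suppose the conditional squared error `e(x) = E[(Y − g(X))² | X = x, S=1]` and the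
inverse odds `w(x) = P(S=0|X=x)/P(S=1|X=x)` are both nondecreasing functions of a real
covariate `X`, with at least one of them non-constant under the source distribution.
Then, under conditional independence of `Y` and `S` given `X` and positivity, the
target-population MSE is at least the source-population MSE:
`E[(Y − g(X))² | S=0] ≥ E[(Y − g(X))² | S=1]`, with equality iff `e(X)` or `w(X)` is
a.s. constant (under the source law of `X`). -/
theorem stmt_12 {Ω : Type*} [MeasurableSpace Ω]
    (μ : Measure Ω) [IsProbabilityMeasure μ]
    (Y : Ω → ℝ) (X : Ω → ℝ) (S : Ω → Bool) (g : ℝ → ℝ)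
    (hY : Measurable Y) (hX : Measurable X) (hS : Measurable S) (hg : Measurable g)
    (hs1 : μ {ω | S ω = true} ≠ 0) (hs0 : μ {ω | S ω = false} ≠ 0)
    (hY2int : Integrable (fun ω => (Y ω) ^ 2) μ)
    (hMSEint : Integrable (fun ω => (Y ω - g (X ω)) ^ 2) μ)
    (hpos : ∀ᵐ x ∂(μ.map X),
      0 < condDistrib S X μ x {true} ∧ condDistrib S X μ x {true} < 1)
    (hcondDist : ∀ᵐ x ∂(μ.map X),
      condDistrib Y X (μ[|{ω | S ω = true}]) x
        = condDistrib Y X (μ[|{ω | S ω = false}]) x)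
    -- e is nondecreasing in x
    (hemono : Monotone (fun x =>
      ∫ y, (y - g x) ^ 2 ∂(condDistrib Y X (μ[|{ω | S ω = true}]) x)))
    -- w is nondecreasing in x
    (hwmono : Monotone (fun x =>
      (condDistrib S X μ x {false}).toReal / (condDistrib S X μ x {true}).toReal))
    -- at least one of e and w is non-constant under the source distribution of X
    (hnonconst :
      (¬ ∃ c, ∀ᵐ x ∂((μ[|{ω | S ω = true}]).map X),
          (∫ y, (y - g x) ^ 2 ∂(condDistrib Y X (μ[|{ω | S ω = true}]) x)) = c)
      ∨ (¬ ∃ c, ∀ᵐ x ∂((μ[|{ω | S ω = true}]).map X),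
          (condDistrib S X μ x {false}).toReal
            / (condDistrib S X μ x {true}).toReal = c)) :
    (∫ ω, (Y ω - g (X ω)) ^ 2 ∂(μ[|{ω | S ω = false}])
        ≥ ∫ ω, (Y ω - g (X ω)) ^ 2 ∂(μ[|{ω | S ω = true}]))
    ∧ ((∫ ω, (Y ω - g (X ω)) ^ 2 ∂(μ[|{ω | S ω = false}])
          = ∫ ω, (Y ω - g (X ω)) ^ 2 ∂(μ[|{ω | S ω = true}]))
        ↔ ((∃ c, ∀ᵐ x ∂((μ[|{ω | S ω = true}]).map X),
              (∫ y, (y - g x) ^ 2 ∂(condDistrib Y X (μ[|{ω | S ω = true}]) x)) = c)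
          ∨ (∃ c, ∀ᵐ x ∂((μ[|{ω | S ω = true}]).map X),
              (condDistrib S X μ x {false}).toReal
                / (condDistrib S X μ x {true}).toReal = c))) := by
  classical
  set s1 := {ω | S ω = true} with hs1def
  set s0 := {ω | S ω = false} with hs0def
  have hms1 : MeasurableSet s1 := hS (measurableSet_singleton true)
  have hms0 : MeasurableSet s0 := hS (measurableSet_singleton false)
  haveI hP1 : IsProbabilityMeasure (μ[|s1]) := cond_isProbabilityMeasure hs1
  haveI hP0 : IsProbabilityMeasure (μ[|s0]) := cond_isProbabilityMeasure hs0
  set μX := μ.map X with hmuXdef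
  haveI : IsProbabilityMeasure μX := Measure.isProbabilityMeasure_map hX.aemeasurable
  set ν1 := (μ[|s1]).map X with hnu1def
  set ν0 := (μ[|s0]).map X with hnu0def
  haveI : IsProbabilityMeasure ν1 := Measure.isProbabilityMeasure_map hX.aemeasurable
  haveI : IsProbabilityMeasure ν0 := Measure.isProbabilityMeasure_map hX.aemeasurable
  set κ := condDistrib S X μ with hkdef
  set e : ℝ → ℝ := fun x => ∫ y, (y - g x) ^ 2 ∂(condDistrib Y X (μ[|s1]) x) with hedef
  set w : ℝ → ℝ := fun x => (κ x {false}).toReal / (κ x {true}).toReal with hwdef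
  have hme : Measurable e := hemono.measurable
  have hmw : Measurable w := hwmono.measurable
  have he_nn : ∀ x, 0 ≤ e x := fun x => integral_nonneg fun y => sq_nonneg _
  have hw_nn : ∀ x, 0 ≤ w x := fun x => div_nonneg ENNReal.toReal_nonneg ENNReal.toReal_nonneg
  have hmE : Measurable (fun x => ENNReal.ofReal (e x)) := hme.ennreal_ofReal
  have hmW : Measurable (fun x => ENNReal.ofReal (w x)) := hmw.ennreal_ofReal
  have hκm : ∀ b : Bool, Measurable fun x => κ x {b} := fun b =>
    Kernel.measurable_coe κ (measurableSet_singleton b)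
  -- integrability of the squared error under conditional measures
  have hint_cond : ∀ s : Set Ω, μ s ≠ 0 →
      Integrable (fun ω => (Y ω - g (X ω)) ^ 2) (μ[|s]) := by
    intro s hs
    have hc : μ[|s] = (μ s)⁻¹ • μ.restrict s := rfl
    rw [hc]
    exact (hMSEint.restrict).smul_measure (ENNReal.inv_ne_top.2 hs)
  -- step A : disintegration of the MSE
  have hfSM : StronglyMeasurable (fun p : ℝ × ℝ => (p.2 - g p.1) ^ 2) :=
    ((measurable_snd.sub (hg.comp measurable_fst)).pow_const 2).stronglyMeasurable
  have stepA : ∀ (m : Measure Ω) [IsProbabilityMeasure m],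
      Integrable (fun ω => (Y ω - g (X ω)) ^ 2) m →
      (∫ ω, (Y ω - g (X ω)) ^ 2 ∂m
        = ∫ x, (∫ y, (y - g x) ^ 2 ∂(condDistrib Y X m x)) ∂(m.map X))
      ∧ Integrable (fun x => ∫ y, (y - g x) ^ 2 ∂(condDistrib Y X m x)) (m.map X) := by
    intro m hm hint
    have hintm : Integrable (fun p : ℝ × ℝ => (p.2 - g p.1) ^ 2)
        (m.map fun a => (X a, Y a)) := by
      rw [integrable_map_measure hfSM.aestronglyMeasurable
        (hX.aemeasurable.prodMk hY.aemeasurable)]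
      exact hint
    constructor
    · have h1 : ∫ x, (∫ y, (y - g x) ^ 2 ∂(condDistrib Y X m x)) ∂(m.map X)
          = ∫ p, (fun p : ℝ × ℝ => (p.2 - g p.1) ^ 2) p ∂(m.map fun a => (X a, Y a)) := by
        rw [condDistrib, ← Measure.fst_map_prodMk₀ (X := X)
          (hY.aemeasurable : AEMeasurable Y m)]
        exact MeasureTheory.Measure.integral_condKernel hintm
      have h2 : ∫ p, (fun p : ℝ × ℝ => (p.2 - g p.1) ^ 2) p ∂(m.map fun a => (X a, Y a))
          = ∫ ω, (Y ω - g (X ω)) ^ 2 ∂m := by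
        rw [integral_map (hX.aemeasurable.prodMk hY.aemeasurable) hfSM.aestronglyMeasurable]
      rw [h1, h2]
    · exact hintm.integral_condDistrib_map hY.aemeasurable
  -- density representation of the conditional laws of X
  have hdens : ∀ (b : Bool) (sb : Set Ω), sb = S ⁻¹' {b} → MeasurableSet sb → μ sb ≠ 0 →
      (μ[|sb]).map X = μX.withDensity (fun x => (μ sb)⁻¹ * κ x {b}) := by
    intro b sb hsb hmsb hne
    ext A hA
    rw [Measure.map_apply hX hA, cond_apply hmsb, withDensity_apply _ hA,
      lintegral_const_mul' _ _ (ENNReal.inv_ne_top.2 hne)]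
    congr 1
    have h1 : ∫⁻ x in A, κ x {b} ∂μX = μ (X ⁻¹' A ∩ S ⁻¹' {b}) := by
      rw [hmuXdef, setLIntegral_map hA (hκm b) hX]
      exact setLIntegral_preimage_condDistrib hX hS.aemeasurable
        (measurableSet_singleton b) hA
    rw [h1, hsb, Set.inter_comm]
  have hdens1 := hdens true s1 (by rw [hs1def]; rfl) hms1 hs1
  have hdens0 := hdens false s0 (by rw [hs0def]; rfl) hms0 hs0
  -- lintegral over conditional laws
  have hLW : ∀ (b : Bool) (sb : Set Ω), sb = S ⁻¹' {b} → MeasurableSet sb → μ sb ≠ 0 →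
      ∀ (F : ℝ → ℝ≥0∞), Measurable F →
      ∫⁻ x, F x ∂((μ[|sb]).map X) = (μ sb)⁻¹ * ∫⁻ x, F x * κ x {b} ∂μX := by
    intro b sb hsb hmsb hne F hF
    rw [hdens b sb hsb hmsb hne,
      lintegral_withDensity_eq_lintegral_mul _ ((hκm b).const_mul _) hF,
      ← lintegral_const_mul' _ _ (ENNReal.inv_ne_top.2 hne)]
    congr 1
    funext x
    dsimp
    ring
  -- total mass identities
  have hPint : ∀ (b : Bool) (sb : Set Ω), sb = S ⁻¹' {b} →
      ∫⁻ x, κ x {b} ∂μX = μ sb := by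
    intro b sb hsb
    have h := setLIntegral_preimage_condDistrib (μ := μ) (Y := S) (X := X) hX
      hS.aemeasurable (measurableSet_singleton b) (MeasurableSet.univ (α := ℝ))
    rw [Set.preimage_univ, Measure.restrict_univ, Set.univ_inter] at h
    rw [hmuXdef, hkdef, lintegral_map (by rw [hkdef] at hκm; exact hκm b) hX, hsb]
    exact h
  -- a.e. facts about the kernel weights
  have haeW : ∀ᵐ x ∂μX, ENNReal.ofReal (w x) * κ x {true} = κ x {false}
      ∧ κ x {false} + κ x {true} = 1 := by
    filter_upwards [hpos] with x hx
    have h1 : κ x {true} ≠ 0 := hx.1.ne'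
    have h2 : κ x {true} ≠ ⊤ := measure_ne_top _ _
    have h3 : κ x {false} ≠ ⊤ := measure_ne_top _ _
    have hW : ENNReal.ofReal (w x) = κ x {false} / κ x {true} := by
      rw [hwdef]
      dsimp only
      rw [ENNReal.ofReal_div_of_pos (ENNReal.toReal_pos h1 h2),
        ENNReal.ofReal_toReal h3, ENNReal.ofReal_toReal h2]
    constructor
    · rw [hW]
      exact ENNReal.div_mul_cancel h1 h2
    · have hcompl : ({true} : Set Bool)ᶜ = {false} := by
        ext b; cases b <;> simp
      have := prob_compl_eq_one_sub (μ := κ x) (measurableSet_singleton true)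
      rw [hcompl] at this
      rw [this]
      exact tsub_add_cancel_of_le prob_le_one
  -- key lintegral computations
  have c1top : μ s1 ≠ ⊤ := measure_ne_top μ s1
  have c0top : μ s0 ≠ ⊤ := measure_ne_top μ s0
  have Le1 : ∫⁻ x, ENNReal.ofReal (e x) ∂ν1
      = (μ s1)⁻¹ * ∫⁻ x, ENNReal.ofReal (e x) * κ x {true} ∂μX := by
    rw [hnu1def]; exact hLW true s1 rfl hms1 hs1 _ hmE
  have Le0 : ∫⁻ x, ENNReal.ofReal (e x) ∂ν0
      = (μ s0)⁻¹ * ∫⁻ x, ENNReal.ofReal (e x) * κ x {false} ∂μX := by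
    rw [hnu0def]; exact hLW false s0 rfl hms0 hs0 _ hmE
  have Lw : ∫⁻ x, ENNReal.ofReal (w x) ∂ν1 = (μ s1)⁻¹ * μ s0 := by
    rw [hnu1def, hLW true s1 rfl hms1 hs1 _ hmW]
    congr 1
    rw [← hPint false s0 rfl]
    refine lintegral_congr_ae ?_
    filter_upwards [haeW] with x hx using hx.1
  have Lew : ∫⁻ x, ENNReal.ofReal (e x) * ENNReal.ofReal (w x) ∂ν1
      = (μ s1)⁻¹ * ∫⁻ x, ENNReal.ofReal (e x) * κ x {false} ∂μX := by
    rw [hnu1def, hLW true s1 rfl hms1 hs1 (fun x => ENNReal.ofReal (e x) * ENNReal.ofReal (w x)) (hmE.mul hmW)]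
    congr 1
    refine lintegral_congr_ae ?_
    filter_upwards [haeW] with x hx
    rw [mul_assoc, hx.1]
  -- integrability of e
  have hint1 := hint_cond s1 hs1
  have hint0 := hint_cond s0 hs0
  have he1 : Integrable e ν1 := (stepA (μ[|s1]) hint1).2
  have hac0 : ν0 ≪ μX := by
    rw [hnu0def, hdens0]
    exact withDensity_absolutelyContinuous _ _
  have heae : e =ᵐ[ν0] (fun x => ∫ y, (y - g x) ^ 2 ∂(condDistrib Y X (μ[|s0]) x)) := by
    refine hac0.ae_eq ?_
    filter_upwards [hcondDist] with x hx
    rw [hedef]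
    dsimp only
    rw [hx]
  have he0 : Integrable e ν0 := ((stepA (μ[|s0]) hint0).2).congr heae.symm
  have hfin1 : ∫⁻ x, ENNReal.ofReal (e x) ∂ν1 ≠ ⊤ :=
    ((hasFiniteIntegral_iff_ofReal (ae_of_all _ he_nn)).1 he1.2).ne
  have hfin0 : ∫⁻ x, ENNReal.ofReal (e x) ∂ν0 ≠ ⊤ :=
    ((hasFiniteIntegral_iff_ofReal (ae_of_all _ he_nn)).1 he0.2).ne
  have LeP0 : ∫⁻ x, ENNReal.ofReal (e x) * κ x {false} ∂μX
      = μ s0 * ∫⁻ x, ENNReal.ofReal (e x) ∂ν0 := by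
    rw [Le0, ← mul_assoc, ENNReal.mul_inv_cancel hs0 c0top, one_mul]
  have hw1int : Integrable w ν1 := by
    refine ⟨hmw.aestronglyMeasurable, ?_⟩
    rw [hasFiniteIntegral_iff_ofReal (ae_of_all _ hw_nn), Lw]
    exact ENNReal.mul_lt_top (ENNReal.inv_ne_top.2 hs1).lt_top c0top.lt_top
  have hew1int : Integrable (fun x => e x * w x) ν1 := by
    refine ⟨(hme.mul hmw).aestronglyMeasurable, ?_⟩
    rw [hasFiniteIntegral_iff_ofReal (ae_of_all _ fun x => mul_nonneg (he_nn x) (hw_nn x)),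
      show ∫⁻ x, ENNReal.ofReal (e x * w x) ∂ν1
        = ∫⁻ x, ENNReal.ofReal (e x) * ENNReal.ofReal (w x) ∂ν1 from
        lintegral_congr fun x => ENNReal.ofReal_mul (he_nn x), Lew, LeP0]
    exact ENNReal.mul_lt_top (ENNReal.inv_ne_top.2 hs1).lt_top
      (ENNReal.mul_lt_top c0top.lt_top hfin0.lt_top).ne.lt_top
  -- Bochner values
  have hBe0 : ∫ x, e x ∂ν0 = (∫⁻ x, ENNReal.ofReal (e x) ∂ν0).toReal :=
    integral_eq_lintegral_of_nonneg_ae (ae_of_all _ he_nn) hme.aestronglyMeasurable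
  have hBw : ∫ x, w x ∂ν1 = ((μ s1)⁻¹ * μ s0).toReal := by
    rw [integral_eq_lintegral_of_nonneg_ae (ae_of_all _ hw_nn) hmw.aestronglyMeasurable, Lw]
  have hBew : ∫ x, e x * w x ∂ν1 = ((μ s1)⁻¹ * μ s0).toReal * ∫ x, e x ∂ν0 := by
    rw [integral_eq_lintegral_of_nonneg_ae
        (ae_of_all _ fun x => mul_nonneg (he_nn x) (hw_nn x))
        (hme.mul hmw).aestronglyMeasurable,
      show ∫⁻ x, ENNReal.ofReal (e x * w x) ∂ν1
        = ∫⁻ x, ENNReal.ofReal (e x) * ENNReal.ofReal (w x) ∂ν1 from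
        lintegral_congr fun x => ENNReal.ofReal_mul (he_nn x),
      Lew, LeP0, hBe0, ENNReal.toReal_mul, ENNReal.toReal_mul, ENNReal.toReal_mul]
    ring
  set k : ℝ := ((μ s1)⁻¹ * μ s0).toReal with hk
  have hkpos : 0 < k :=
    ENNReal.toReal_pos (mul_ne_zero (ENNReal.inv_ne_zero.2 c1top) hs0)
      (ENNReal.mul_ne_top (ENNReal.inv_ne_top.2 hs1) c0top)
  have cheb := chebyshev_corr hemono hwmono he1 hw1int hew1int
  have hgoalA : ∫ ω, (Y ω - g (X ω)) ^ 2 ∂(μ[|s1]) = ∫ x, e x ∂ν1 :=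
    (stepA (μ[|s1]) hint1).1
  have hgoalB : ∫ ω, (Y ω - g (X ω)) ^ 2 ∂(μ[|s0]) = ∫ x, e x ∂ν0 :=
    calc ∫ ω, (Y ω - g (X ω)) ^ 2 ∂(μ[|s0])
        = ∫ x, (∫ y, (y - g x) ^ 2 ∂(condDistrib Y X (μ[|s0]) x)) ∂ν0 :=
          (stepA (μ[|s0]) hint0).1
      _ = ∫ x, e x ∂ν0 := (integral_congr_ae heae).symm
  rw [hgoalA, hgoalB]
  have hineq := cheb.1
  rw [hBw, hBew] at hineq
  constructor
  · nlinarith [hkpos, hineq]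
  constructor
  · intro hBA
    refine cheb.2.1 ?_
    rw [hBew, hBw, hBA]
    ring
  · intro hR
    have heq := cheb.2.2 hR
    rw [hBew, hBw] at heq
    exact mul_left_cancel₀ hkpos.ne' (by linarith [heq])
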